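/- A bounded linear operator T on a Hilbert space with polar decomposition T = U|T| is quasinormal (i.e., U|T| = |T|U) if and only if its Aluthge transform satisfies Δ(T) = T. -/

import Mathlib

set_option synthInstance.maxHeartbeats 1000000

open ContinuousLinearMap in
theorem my_commute_cfc {H : Type*} [NormedAddCommGroup H]
    [InnerProductSpace ℂ H] [CompleteSpace H] (a b : H →L[ℂ] H)
    (ha : IsSelfAdjoint a) (hab : b * a = a * b) (f : ℝ → ℝ) :
    b * cfc f a = cfc f a * b := by
  by_cases hf : ContinuousOn f (spectrum ℝ a)
  · rw [cfc_apply f a ha hf]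
    set K : Subalgebra ℝ (H →L[ℂ] H) := Subalgebra.centralizer ℝ {b}
    have hKclosed : IsClosed (K : Set (H →L[ℂ] H)) := by
      have : (K : Set (H →L[ℂ] H)) = {x | b * x = x * b} := by
        ext x
        simp only [K, SetLike.mem_coe, Subalgebra.mem_centralizer_iff, Set.mem_singleton_iff,
          forall_eq, Set.mem_setOf_eq]
      rw [this]
      exact isClosed_eq (continuous_const.mul continuous_id) (continuous_id.mul continuous_const)
    set comap := K.comap ((cfcHom ha (R := ℝ)).toAlgHom : C(spectrum ℝ a, ℝ) →ₐ[ℝ] (H →L[ℂ] H))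
    have hpoly : polynomialFunctions (spectrum ℝ a) ≤ comap := by
      rw [polynomialFunctions.eq_adjoin_X]
      apply Algebra.adjoin_le
      rintro x rfl
      show cfcHom ha _ ∈ K
      rw [Polynomial.toContinuousMapOnAlgHom_apply, Polynomial.toContinuousMapOn_X_eq_restrict_id,
        cfcHom_id ha]
      rw [Subalgebra.mem_centralizer_iff]
      intro g hg; rw [Set.mem_singleton_iff] at hg; subst hg; exact hab
    have hclosed : IsClosed (comap : Set C(spectrum ℝ a, ℝ)) :=
      hKclosed.preimage (cfcHom_continuous ha)
    have htop : (⊤ : Subalgebra ℝ C(spectrum ℝ a, ℝ)) ≤ comap := by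
      rw [← polynomialFunctions.topologicalClosure (spectrum ℝ a)]
      exact Subalgebra.topologicalClosure_minimal hpoly hclosed
    have := htop (Algebra.mem_top (x := ⟨_, hf.restrict⟩))
    rw [Subalgebra.mem_comap, Subalgebra.mem_centralizer_iff] at this
    exact this b rfl
  · rw [cfc_apply_of_not_continuousOn a hf]
    simp

open ContinuousLinearMap in
theorem my_sqrt_eq {H : Type*} [NormedAddCommGroup H]
    [InnerProductSpace ℂ H] [CompleteSpace H] (R : H →L[ℂ] H) (hR : 0 ≤ R) :
    CFC.sqrt R = cfc Real.sqrt R := by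
  have hRsa : IsSelfAdjoint R := hR.isSelfAdjoint
  have hspec : ∀ x ∈ spectrum ℝ R, 0 ≤ x := fun x hx => spectrum_nonneg_of_nonneg hR hx
  have h1 : (0 : H →L[ℂ] H) ≤ cfc Real.sqrt R := cfc_nonneg (fun x _ => Real.sqrt_nonneg x)
  have h2 : cfc Real.sqrt R * cfc Real.sqrt R = R := by
    rw [← cfc_mul Real.sqrt Real.sqrt R]
    calc cfc (fun x => Real.sqrt x * Real.sqrt x) R = cfc (id : ℝ → ℝ) R := by
          apply cfc_congr
          intro x hx
          simpa using Real.mul_self_sqrt (hspec x hx)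
      _ = R := cfc_id ℝ R
  exact CFC.sqrt_unique h2 h1

open ContinuousLinearMap in
/-- `T` with polar decomposition `T = U|T|` is quasinormal (`U|T| = |T|U`) iff
its Aluthge transform satisfies `Δ(T) = T`. -/
theorem quasinormal_iff_aluthge_fixed {H : Type*} [NormedAddCommGroup H]
    [InnerProductSpace ℂ H] [CompleteSpace H] (T U R : H →L[ℂ] H)
    (hR : 0 ≤ R) (hR2 : R * R = adjoint T * T) (hT : T = U * R)
    (hker : LinearMap.ker (U : H →ₗ[ℂ] H) = LinearMap.ker (R : H →ₗ[ℂ] H)) :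
    U * R = R * U ↔ CFC.sqrt R * U * CFC.sqrt R = T := by
  set S := CFC.sqrt R with hSdef
  have hS2 : S * S = R := CFC.sqrt_mul_sqrt_self R hR
  have hSnn : (0 : H →L[ℂ] H) ≤ S := CFC.sqrt_nonneg R
  have hSsa : IsSelfAdjoint S := hSnn.isSelfAdjoint
  have hSadj : adjoint S = S := hSsa
  -- ker S = ker R
  have hkerS : LinearMap.ker (S : H →ₗ[ℂ] H) = LinearMap.ker (R : H →ₗ[ℂ] H) := by
    ext x
    simp only [LinearMap.mem_ker, ContinuousLinearMap.coe_coe]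
    constructor
    · intro hx
      have : R x = S (S x) := by rw [← hS2]; rfl
      rw [this, hx, map_zero]
    · intro hx
      have h0 : (inner ℂ (S x) (S x) : ℂ) = 0 := by
        have h3 := ContinuousLinearMap.adjoint_inner_left S (S x) x
        rw [hSadj] at h3
        have h2 : S (S x) = R x := by rw [← hS2]; rfl
        rw [h3, h2, hx, inner_zero_right]
      exact inner_self_eq_zero.mp h0
  constructor
  · intro h
    have hcomm : U * S = S * U := by
      rw [hSdef, my_sqrt_eq R hR]
      exact my_commute_cfc R U hR.isSelfAdjoint h Real.sqrt
    calc S * U * S = S * (U * S) := by rw [mul_assoc]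
      _ = S * (S * U) := by rw [hcomm]
      _ = S * S * U := by rw [mul_assoc]
      _ = R * U := by rw [hS2]
      _ = U * R := h.symm
      _ = T := hT.symm
  · intro h
    rw [hT] at h
    -- h : S * U * S = U * R = U * (S * S)
    set B := S * S * U - U * (S * S) with hBdef
    have hBS : ∀ x, B (S x) = 0 := by
      intro x
      have key : S * S * U * S = U * (S * S) * S := by
        calc S * S * U * S = S * (S * U * S) := by noncomm_ring
          _ = S * (U * R) := by rw [h]
          _ = S * (U * (S * S)) := by rw [hS2]
          _ = (S * U * S) * S := by noncomm_ring
          _ = (U * R) * S := by rw [h]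
          _ = U * (S * S) * S := by rw [hS2]
      have := congrFun (congrArg DFunLike.coe (show B * S = 0 by rw [hBdef]; rw [sub_mul, key, sub_self])) x
      simpa using this
    have hkerU : ∀ x, S x = 0 → U x = 0 := by
      intro x hx
      have : x ∈ LinearMap.ker (U : H →ₗ[ℂ] H) := by
        rw [hker, ← hkerS]; exact hx
      exact this
    have hBker : ∀ x, S x = 0 → B x = 0 := by
      intro x hx
      have h1 : U x = 0 := hkerU x hx
      simp only [hBdef, ContinuousLinearMap.sub_apply, ContinuousLinearMap.mul_apply, h1, hx,
        map_zero, sub_zero, sub_self]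
    -- orthogonality argument
    have hB : B = 0 := by
      have hclosed : IsClosed (LinearMap.ker (B : H →ₗ[ℂ] H) : Set H) := ContinuousLinearMap.isClosed_ker B
      haveI : CompleteSpace (LinearMap.ker (B : H →ₗ[ℂ] H)) := hclosed.completeSpace_coe
      have hbot : (LinearMap.ker (B : H →ₗ[ℂ] H))ᗮ = ⊥ := by
        rw [Submodule.eq_bot_iff]
        intro v hv
        have hSv : S v = 0 := by
          have h1 : (inner ℂ (S (S v)) v : ℂ) = 0 := by
            apply hv
            rw [LinearMap.mem_ker]
            exact hBS (S v)
          have h3 := ContinuousLinearMap.adjoint_inner_left S (S v) v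
          rw [hSadj] at h3
          have h1' : (inner ℂ v (S (S v)) : ℂ) = 0 := inner_eq_zero_symm.mp h1
          have h2 : (inner ℂ (S v) (S v) : ℂ) = 0 := by rw [h3]; exact h1'
          exact inner_self_eq_zero.mp h2
        have hvker : v ∈ LinearMap.ker (B : H →ₗ[ℂ] H) := by
          rw [LinearMap.mem_ker]; exact hBker v hSv
        have := hv v hvker
        exact inner_self_eq_zero.mp this
      have htop : LinearMap.ker (B : H →ₗ[ℂ] H) = ⊤ := by
        have := congrArg (fun (K : Submodule ℂ H) => Kᗮ) hbot
        simpa [Submodule.orthogonal_orthogonal] using this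
      ext x
      have : x ∈ LinearMap.ker (B : H →ₗ[ℂ] H) := htop ▸ Submodule.mem_top
      simpa using this
    have : S * S * U = U * (S * S) := by
      have := sub_eq_zero.mp hB
      exact this
    rw [hS2] at this
    exact this.symm
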